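/- The kernel-based effective dimension never exceeds the kernel-based upper metric dimension: d_K = limsup_{n→∞} log n / log(1/w_K(n)) ≤ limsup_{ε→0+} log N(ε,Ω,ϱ) / log(1/ε) = d_ϱ, where both limsups are taken in [0,∞] with the convention log(1/0) = +∞ (and a ratio with denominator +∞ equal to 0). -/

import Mathlib

open MeasureTheory Filter
open scoped ENNReal

noncomputable section

/-- The Kolmogorov `n`-width of the image of `Ω` under `Φ` in the Hilbert space `H`. -/
def kolmWidth {E H : Type*} [NormedAddCommGroup H] [InnerProductSpace ℝ H]
    (Ω : Set E) (Φ : E → H) (n : ℕ) : ℝ :=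
  ⨅ L : {L : Submodule ℝ H // ∃ s : Finset H, s.card ≤ n ∧ L = Submodule.span ℝ (s : Set H)},
    ⨆ x : Ω, Metric.infDist (Φ (x : E)) (L.1 : Set H)

/-- The `ε`-covering number of `(Ω, ϱ)`: the least `M` such that `Ω` is covered by `M`
closed `ϱ`-balls of radius `ε` with centers in `Ω`. -/
def covN {E : Type*} (Ω : Set E) (ϱ : E → E → ℝ) (ε : ℝ) : ℕ :=
  sInf {M : ℕ | ∃ z : Fin M → E, (∀ i, z i ∈ Ω) ∧ ∀ x ∈ Ω, ∃ i, ϱ x (z i) ≤ ε}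

/-- The kernel-based upper metric (Minkowski) dimension
`d_ϱ = limsup_{ε→0+} log N(ε,Ω,ϱ) / log (1/ε)`, taken in `[0,∞]`. -/
def metricDim {E : Type*} (Ω : Set E) (ϱ : E → E → ℝ) : ℝ≥0∞ :=
  Filter.limsup (fun ε : ℝ => ENNReal.ofReal (Real.log (covN Ω ϱ ε) / Real.log (1 / ε)))
    (nhdsWithin 0 (Set.Ioi 0))

/-- The kernel-based effective dimension `d_K = limsup_{n→∞} log n / log (1/w_K(n))`,
taken in `[0,∞]`, with the convention `log (1/0) = +∞` and a ratio with denominator `+∞`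
equal to `0`. -/
def effDim (w : ℕ → ℝ) : ℝ≥0∞ :=
  Filter.limsup (fun n : ℕ =>
    if w n = 0 then 0 else ENNReal.ofReal (Real.log n / Real.log (1 / w n))) Filter.atTop

section Aux

variable {E H : Type*} [NormedAddCommGroup H] [InnerProductSpace ℝ H]
  (Ω : Set E) (Φ : E → H)

lemma mySupNonneg (L : Submodule ℝ H) :
    0 ≤ ⨆ x : Ω, Metric.infDist (Φ (x : E)) (L : Set H) :=
  Real.iSup_nonneg fun x => Metric.infDist_nonneg

lemma kolmWidth_nonneg (n : ℕ) : 0 ≤ kolmWidth Ω Φ n :=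
  Real.iInf_nonneg fun L => mySupNonneg Ω Φ L.1

lemma kolmWidth_bddBelow (n : ℕ) :
    BddBelow (Set.range fun L : {L : Submodule ℝ H //
        ∃ s : Finset H, s.card ≤ n ∧ L = Submodule.span ℝ (s : Set H)} =>
      ⨆ x : Ω, Metric.infDist (Φ (x : E)) (L.1 : Set H)) := by
  refine ⟨0, ?_⟩
  rintro r ⟨L, rfl⟩
  exact mySupNonneg Ω Φ L.1

instance kolmIdxNonempty (n : ℕ) : Nonempty {L : Submodule ℝ H //
    ∃ s : Finset H, s.card ≤ n ∧ L = Submodule.span ℝ (s : Set H)} :=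
  ⟨⟨⊥, ∅, by simp⟩⟩

lemma kolmWidth_anti {m n : ℕ} (h : m ≤ n) : kolmWidth Ω Φ n ≤ kolmWidth Ω Φ m := by
  refine le_ciInf fun L => ?_
  obtain ⟨s, hs, hL⟩ := L.2
  exact ciInf_le (kolmWidth_bddBelow Ω Φ n) ⟨L.1, s, hs.trans h, hL⟩

lemma kolmWidth_le_of_cover (hne : Ω.Nonempty) {M : ℕ} {ε : ℝ}
    (z : Fin M → E) (hz : ∀ x ∈ Ω, ∃ i, ‖Φ x - Φ (z i)‖ ≤ ε) :
    kolmWidth Ω Φ M ≤ ε := by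
  have hΩne : Nonempty Ω := hne.to_subtype
  haveI := Classical.decEq H
  set s : Finset H := Finset.image (fun i => Φ (z i)) Finset.univ with hs
  have hcard : s.card ≤ M := (Finset.card_image_le).trans (by simp)
  set L : Submodule ℝ H := Submodule.span ℝ (s : Set H) with hL
  have hle : (⨆ x : Ω, Metric.infDist (Φ (x : E)) (L : Set H)) ≤ ε := by
    refine ciSup_le fun x => ?_
    obtain ⟨i, hi⟩ := hz x x.2
    have hmem : Φ (z i) ∈ (L : Set H) := by
      apply Submodule.subset_span
      rw [hs]
      exact Finset.mem_image.mpr ⟨i, Finset.mem_univ i, rfl⟩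
    calc Metric.infDist (Φ (x : E)) (L : Set H) ≤ dist (Φ (x : E)) (Φ (z i)) :=
          Metric.infDist_le_dist_of_mem hmem
      _ ≤ ε := by rw [dist_eq_norm]; exact hi
  calc kolmWidth Ω Φ M ≤ ⨆ x : Ω, Metric.infDist (Φ (x : E)) (L : Set H) :=
        ciInf_le (kolmWidth_bddBelow Ω Φ M) ⟨L, s, hcard, hL⟩
    _ ≤ ε := hle

lemma covSet_nonempty [PseudoMetricSpace E] (hΩ : IsCompact Ω) (hne : Ω.Nonempty)
    (hΦ : ContinuousOn Φ Ω) {ε : ℝ} (hε : 0 < ε) :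
    {M : ℕ | ∃ z : Fin M → E, (∀ i, z i ∈ Ω) ∧
      ∀ x ∈ Ω, ∃ i, ‖Φ x - Φ (z i)‖ ≤ ε}.Nonempty := by
  have hK : IsCompact (Φ '' Ω) := hΩ.image_of_continuousOn hΦ
  obtain ⟨t, hts, htf, hcov⟩ := hK.finite_cover_balls hε
  have hpre : ∀ y : H, ∃ x, x ∈ Ω ∧ (y ∈ t → Φ x = y) := by
    intro y
    by_cases hy : y ∈ t
    · obtain ⟨x, hx, hxy⟩ := hts hy
      exact ⟨x, hx, fun _ => hxy⟩
    · exact ⟨hne.choose, hne.choose_spec, fun h => absurd h hy⟩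
  choose pick hpickΩ hpickΦ using hpre
  have hΩne : Ω.Nonempty := hne
  set M := htf.toFinset.card with hM
  set e : htf.toFinset ≃ Fin M := htf.toFinset.equivFin with he
  refine ⟨M, fun i => pick ((e.symm i) : H), fun i => hpickΩ _, ?_⟩
  · intro x hx
    have : Φ x ∈ ⋃ y ∈ t, Metric.ball y ε := hcov ⟨x, hx, rfl⟩
    simp only [Set.mem_iUnion] at this
    obtain ⟨y, hy, hxy⟩ := this
    refine ⟨e ⟨y, htf.mem_toFinset.mpr hy⟩, ?_⟩
    rw [← dist_eq_norm]
    simp only [e.symm_apply_apply]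
    rw [hpickΦ y hy]
    exact le_of_lt hxy

end Aux

/-- the kernel-based effective dimension never exceeds the kernel-based
upper metric dimension: `d_K ≤ d_ϱ`. -/
theorem effDim_le_metricDim {d : ℕ} {H : Type*} [NormedAddCommGroup H] [InnerProductSpace ℝ H]
    (Ω : Set (EuclideanSpace ℝ (Fin d))) (hΩ : IsCompact Ω) (hne : Ω.Nonempty)
    (Φ : EuclideanSpace ℝ (Fin d) → H) (hΦ : ContinuousOn Φ Ω) :
    effDim (kolmWidth Ω Φ) ≤ metricDim Ω (fun x y => ‖Φ x - Φ y‖) := by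
  set ϱ : EuclideanSpace ℝ (Fin d) → EuclideanSpace ℝ (Fin d) → ℝ :=
    fun x y => ‖Φ x - Φ y‖ with hϱ
  set W := kolmWidth Ω Φ with hW
  set F := fun ε : ℝ => covN Ω ϱ ε with hF
  -- basic facts about the covering number for positive radius
  have hkey : ∀ ε : ℝ, 0 < ε → 1 ≤ F ε ∧ W (F ε) ≤ ε := by
    intro ε hε
    have hmem : F ε ∈ {M : ℕ | ∃ z : Fin M → EuclideanSpace ℝ (Fin d),
        (∀ i, z i ∈ Ω) ∧ ∀ x ∈ Ω, ∃ i, ϱ x (z i) ≤ ε} :=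
      Nat.sInf_mem (covSet_nonempty Ω Φ hΩ hne hΦ hε)
    obtain ⟨z, hzΩ, hzcov⟩ := hmem
    constructor
    · rcases Nat.eq_zero_or_pos (F ε) with h0 | h1
      · exfalso
        obtain ⟨x, hx⟩ := hne
        obtain ⟨i, -⟩ := hzcov x hx
        rw [h0] at i
        exact i.elim0
      · exact h1
    · exact kolmWidth_le_of_cover Ω Φ hne z hzcov
  by_contra hlt
  push_neg at hlt
  obtain ⟨c, hDc, hce⟩ := exists_between hlt
  obtain ⟨b, hDb, hbc⟩ := exists_between hDc
  have hc_top : c ≠ ⊤ := hce.ne_top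
  have hb_top : b ≠ ⊤ := hbc.ne_top
  have hb_pos : 0 < b := lt_of_le_of_lt zero_le hDb
  set s : ℝ := b.toReal with hs
  set t : ℝ := c.toReal with ht
  have hs_pos : 0 < s := ENNReal.toReal_pos hb_pos.ne' hb_top
  have hst : s < t := (ENNReal.toReal_lt_toReal hb_top hc_top).mpr hbc
  have ht_pos : 0 < t := hs_pos.trans hst
  -- From D < b : eventually the covering ratio is < s
  have hev : ∀ᶠ ε in nhdsWithin (0:ℝ) (Set.Ioi 0),
      ENNReal.ofReal (Real.log (F ε) / Real.log (1 / ε)) < b :=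
    Filter.eventually_lt_of_limsup_lt hDb
  rw [eventually_nhdsWithin_iff, Metric.eventually_nhds_iff] at hev
  obtain ⟨ε₀, hε₀, hevs⟩ := hev
  have hratio : ∀ ε : ℝ, 0 < ε → ε < ε₀ → Real.log (F ε) / Real.log (1 / ε) < s := by
    intro ε h1 h2
    have hd : dist ε (0:ℝ) < ε₀ := by
      rw [Real.dist_eq, sub_zero, abs_of_pos h1]; exact h2
    have := hevs hd h1
    by_contra hge
    push_neg at hge
    have : b ≤ ENNReal.ofReal (Real.log (F ε) / Real.log (1 / ε)) := by
      calc b = ENNReal.ofReal s := (ENNReal.ofReal_toReal hb_top).symm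
        _ ≤ _ := ENNReal.ofReal_le_ofReal hge
    exact absurd this (not_le.mpr (hevs hd h1))
  -- From c < effDim : frequently the width ratio is > c
  have hfreq : ∃ᶠ n in atTop, c < (if W n = 0 then 0
      else ENNReal.ofReal (Real.log n / Real.log (1 / W n))) :=
    Filter.frequently_lt_of_lt_limsup (by isBoundedDefault) hce
  -- Now show the width ratio is eventually ≤ c, a contradiction
  have hevle : ∀ᶠ n : ℕ in atTop, (if W n = 0 then 0
      else ENNReal.ofReal (Real.log n / Real.log (1 / W n))) ≤ c := by
    have htend : Filter.Tendsto (fun n : ℕ => (n : ℝ) ^ (-(1 / t))) atTop (nhds 0) :=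
      (tendsto_rpow_neg_atTop (by positivity)).comp tendsto_natCast_atTop_atTop
    filter_upwards [Filter.eventually_ge_atTop 2,
      htend.eventually (gt_mem_nhds hε₀)] with n hn2 hnε
    set εn : ℝ := (n : ℝ) ^ (-(1 / t)) with hεn
    have hn1 : (1 : ℝ) < n := by exact_mod_cast Nat.lt_of_lt_of_le one_lt_two hn2
    have hn0 : (0 : ℝ) < n := lt_trans one_pos hn1
    have hεn_pos : 0 < εn := Real.rpow_pos_of_pos hn0 _
    have hεn_lt1 : εn < 1 := Real.rpow_lt_one_of_one_lt_of_neg hn1 (neg_lt_zero.mpr (by positivity))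
    have hlogn : 0 < Real.log n := Real.log_pos hn1
    have hlog_inv : Real.log (1 / εn) = (1 / t) * Real.log n := by
      rw [one_div, Real.log_inv, hεn, Real.log_rpow hn0]; ring
    have hlog_inv_pos : 0 < Real.log (1 / εn) := by
      rw [hlog_inv]; positivity
    obtain ⟨hF1, hWF⟩ := hkey εn hεn_pos
    -- bound the covering number : F εn ≤ n
    have hrat := hratio εn hεn_pos hnε
    have hFn : (F εn : ℝ) ≤ (n : ℝ) := by
      have hlogF : Real.log (F εn) < s * Real.log (1 / εn) :=
        (div_lt_iff₀ hlog_inv_pos).mp hrat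
      have hF_pos : (0 : ℝ) < (F εn : ℝ) := by exact_mod_cast hF1
      have h1 : Real.log (F εn) < (s / t) * Real.log n := by
        rw [hlog_inv] at hlogF; calc Real.log (F εn) < s * ((1 / t) * Real.log n) := hlogF
          _ = (s / t) * Real.log n := by ring
      have h2 : (F εn : ℝ) < (n : ℝ) ^ (s / t) := by
        have := Real.exp_lt_exp.mpr h1
        rwa [Real.exp_log hF_pos, ← Real.log_rpow hn0, Real.exp_log
          (Real.rpow_pos_of_pos hn0 _)] at this
      calc (F εn : ℝ) ≤ (n : ℝ) ^ (s / t) := h2.le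
        _ ≤ (n : ℝ) ^ (1 : ℝ) := Real.rpow_le_rpow_of_exponent_le hn1.le
            (by rw [div_le_one ht_pos]; exact hst.le)
        _ = n := Real.rpow_one _
    have hFn' : F εn ≤ n := by exact_mod_cast hFn
    -- hence the width at n is small
    have hWn : W n ≤ εn := (kolmWidth_anti Ω Φ hFn').trans hWF
    by_cases h0 : W n = 0
    · simp [h0]
    · rw [if_neg h0]
      have hWpos : 0 < W n := lt_of_le_of_ne (kolmWidth_nonneg Ω Φ n) (Ne.symm h0)
      have hinv : (n : ℝ) ^ ((1 : ℝ) / t) ≤ 1 / W n := by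
        rw [le_div_iff₀ hWpos]
        calc (n : ℝ) ^ ((1:ℝ) / t) * W n ≤ (n : ℝ) ^ ((1:ℝ) / t) * εn :=
          mul_le_mul_of_nonneg_left hWn (Real.rpow_nonneg hn0.le _)
          _ = 1 := by
            rw [hεn, ← Real.rpow_add hn0]
            simp
      have hlogW : (1 / t) * Real.log n ≤ Real.log (1 / W n) := by
        calc (1 / t) * Real.log n = Real.log ((n : ℝ) ^ ((1:ℝ) / t)) := by
              rw [Real.log_rpow hn0]
          _ ≤ Real.log (1 / W n) :=
              Real.log_le_log (Real.rpow_pos_of_pos hn0 _) hinv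
      have hlogW_pos : 0 < Real.log (1 / W n) :=
        lt_of_lt_of_le (by positivity) hlogW
      have hratn : Real.log n / Real.log (1 / W n) ≤ t := by
        rw [div_le_iff₀ hlogW_pos]
        calc Real.log n = t * ((1 / t) * Real.log n) := by
              field_simp
          _ ≤ t * Real.log (1 / W n) := by
              exact mul_le_mul_of_nonneg_left hlogW ht_pos.le
      calc ENNReal.ofReal (Real.log n / Real.log (1 / W n))
          ≤ ENNReal.ofReal t := ENNReal.ofReal_le_ofReal hratn
        _ = c := ENNReal.ofReal_toReal hc_top
  obtain ⟨n, hn1, hn2⟩ := (hfreq.and_eventually hevle).exists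
  exact absurd hn2 (not_le.mpr hn1)

end
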